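/- Let G be a countably based profinite group with filtration {G_n}, and let K ≤ H ≤ G be closed subgroups. If either K has strong Hausdorff dimension in H (with respect to the induced filtration H_n = H ∩ G_n) or H has strong Hausdorff dimension in G, then hdim_G(K) = hdim_G(H) · hdim_H(K). -/

import Mathlib

open Filter Topology

noncomputable section

/-- the ratio `log|K G_n : G_n| / log|G : G_n| = log|K : K ∩ G_n| / log|G : G_n|` -/
def dimRatio {G : Type*} [Group G] (F : ℕ → Subgroup G) (K : Subgroup G) (n : ℕ) : ℝ :=
  Real.log ((F n).relIndex K) / Real.log ((F n).index)

/-- the Hausdorff dimension of `K` in `G` with respect to the filtration `F`: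
`liminf_n log|K G_n : G_n| / log|G : G_n|` -/
def hdimOf {G : Type*} [Group G] (F : ℕ → Subgroup G) (K : Subgroup G) : ℝ :=
  Filter.liminf (dimRatio F K) Filter.atTop

/-- `K` has strong Hausdorff dimension: the defining lim inf is a limit -/
def HasStrongHdim {G : Type*} [Group G] (F : ℕ → Subgroup G) (K : Subgroup G) : Prop :=
  Filter.Tendsto (dimRatio F K) Filter.atTop (𝓝 (hdimOf F K))

/-- If `c ∣ a` with `c ≠ 0`, then `log c / log a ∈ [0, 1]`. -/
private lemma logRatio_mem_Icc {c a : ℕ} (hc : c ≠ 0) (hdvd : c ∣ a) (ha : a ≠ 0) :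
    Real.log c / Real.log a ∈ Set.Icc (0 : ℝ) 1 := by
  have hca : (c : ℝ) ≤ (a : ℝ) := by exact_mod_cast Nat.le_of_dvd (Nat.pos_of_ne_zero ha) hdvd
  have hc1 : (1 : ℝ) ≤ (c : ℝ) := by exact_mod_cast Nat.one_le_iff_ne_zero.mpr hc
  have hlc : 0 ≤ Real.log c := Real.log_nonneg hc1
  have hla : 0 ≤ Real.log a := Real.log_nonneg (hc1.trans hca)
  have hle : Real.log c ≤ Real.log a := Real.log_le_log (by linarith) hca
  exact ⟨div_nonneg hlc hla, div_le_one_of_le₀ hle hla⟩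

/-- liminf of a product of `[0,1]`-valued sequences when one factor converges to its liminf. -/
private lemma liminf_mul_of_tendsto' {u v : ℕ → ℝ}
    (hu : ∀ n, u n ∈ Set.Icc (0 : ℝ) 1) (hv : ∀ n, v n ∈ Set.Icc (0 : ℝ) 1)
    (h : Filter.Tendsto u Filter.atTop (𝓝 (Filter.liminf u Filter.atTop))) :
    Filter.liminf (fun n => u n * v n) Filter.atTop
      = Filter.liminf u Filter.atTop * Filter.liminf v Filter.atTop := by
  have h₁ : 0 ≤ᶠ[Filter.atTop] u := Filter.Eventually.of_forall fun n => (hu n).1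
  have h₂ : Filter.IsBoundedUnder (· ≤ ·) Filter.atTop u :=
    Filter.isBoundedUnder_of ⟨1, fun n => (hu n).2⟩
  have h₃ : 0 ≤ᶠ[Filter.atTop] v := Filter.Eventually.of_forall fun n => (hv n).1
  have h₄ : Filter.IsBoundedUnder (· ≤ ·) Filter.atTop v :=
    Filter.isBoundedUnder_of ⟨1, fun n => (hv n).2⟩
  have hs : Filter.limsup u Filter.atTop = Filter.liminf u Filter.atTop := by
    have := h.limsup_eq
    rw [this]
  refine le_antisymm ?_ ?_
  · have := liminf_mul_le h₁ h₂ h₃ h₄.isCoboundedUnder_ge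
    rwa [hs] at this
  · exact le_liminf_mul h₁ h₂ h₃ h₄.isCoboundedUnder_ge

/-- symmetric version: one of the two factors converges. -/
private lemma liminf_mul_of_tendsto {u v : ℕ → ℝ}
    (hu : ∀ n, u n ∈ Set.Icc (0 : ℝ) 1) (hv : ∀ n, v n ∈ Set.Icc (0 : ℝ) 1)
    (h : Filter.Tendsto v Filter.atTop (𝓝 (Filter.liminf v Filter.atTop)) ∨
         Filter.Tendsto u Filter.atTop (𝓝 (Filter.liminf u Filter.atTop))) :
    Filter.liminf (fun n => u n * v n) Filter.atTop
      = Filter.liminf u Filter.atTop * Filter.liminf v Filter.atTop := by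
  rcases h with h | h
  · have hcomm : (fun n => u n * v n) = fun n => v n * u n := by
      funext n; ring
    rw [hcomm, liminf_mul_of_tendsto' hv hu h, mul_comm]
  · exact liminf_mul_of_tendsto' hu hv h

/-- Let `G` be a countably based profinite group with a filtration `{G_n}` of
open normal subgroups with trivial intersection, and let `K ≤ H ≤ G` be closed subgroups.
If either `K` has strong Hausdorff dimension in `H` (with respect to the induced filtration
`H_n = H ∩ G_n`) or `H` has strong Hausdorff dimension in `G`, then
`hdim_G(K) = hdim_G(H) · hdim_H(K)`. -/
theorem stmt2 {G : Type*} [Group G] [TopologicalSpace G] [IsTopologicalGroup G]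
    [CompactSpace G] [TotallyDisconnectedSpace G]
    (F : ℕ → Subgroup G) (hopen : ∀ n, IsOpen ((F n : Set G)))
    (hnormal : ∀ n, (F n).Normal) (hanti : Antitone F) (hinter : ⨅ n, F n = ⊥)
    (H K : Subgroup G) (hKH : K ≤ H)
    (hHcl : IsClosed (H : Set G)) (hKcl : IsClosed (K : Set G))
    (hstrong : HasStrongHdim (fun n => (F n).subgroupOf H) (K.subgroupOf H) ∨
      HasStrongHdim F H) :
    hdimOf F K = hdimOf F H * hdimOf (fun n => (F n).subgroupOf H) (K.subgroupOf H) := by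
  -- finiteness and divisibility facts
  have hfin : ∀ n, (F n).index ≠ 0 := by
    intro n
    have : Finite (G ⧸ F n) := Subgroup.quotient_finite_of_isOpen (F n) (hopen n)
    exact Subgroup.index_ne_zero_of_finite
  have hdvdH : ∀ n, (F n).relIndex H ∣ (F n).index := fun n =>
    haveI := hnormal n
    Subgroup.relIndex_dvd_index_of_normal (F n) H
  have hdvdK : ∀ n, (F n).relIndex K ∣ (F n).index := fun n =>
    haveI := hnormal n
    Subgroup.relIndex_dvd_index_of_normal (F n) K
  have hdvdKH : ∀ n, (F n).relIndex K ∣ (F n).relIndex H := by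
    intro n
    haveI : ((F n).subgroupOf H).Normal := (hnormal n).subgroupOf H
    have := Subgroup.relIndex_dvd_index_of_normal ((F n).subgroupOf H) (K.subgroupOf H)
    rwa [Subgroup.relIndex_subgroupOf hKH] at this
  have hHne : ∀ n, (F n).relIndex H ≠ 0 := by
    intro n h0
    exact hfin n (zero_dvd_iff.mp (h0 ▸ hdvdH n))
  have hKne : ∀ n, (F n).relIndex K ≠ 0 := by
    intro n h0
    exact hHne n (zero_dvd_iff.mp (h0 ▸ hdvdKH n))
  -- the induced-filtration ratio, rewritten inside `G`
  have hv_eq : ∀ n, dimRatio (fun n => (F n).subgroupOf H) (K.subgroupOf H) n =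
      Real.log ((F n).relIndex K) / Real.log ((F n).relIndex H) := by
    intro n
    simp only [dimRatio, Subgroup.relIndex_subgroupOf hKH]
    rfl
  -- bounds
  have hu_mem : ∀ n, dimRatio F H n ∈ Set.Icc (0 : ℝ) 1 := fun n =>
    logRatio_mem_Icc (hHne n) (hdvdH n) (hfin n)
  have hv_mem : ∀ n, dimRatio (fun n => (F n).subgroupOf H) (K.subgroupOf H) n
      ∈ Set.Icc (0 : ℝ) 1 := fun n => by
    rw [hv_eq n]; exact logRatio_mem_Icc (hKne n) (hdvdKH n) (hHne n)
  -- pointwise product identity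
  have hpt : dimRatio F K = fun n => dimRatio F H n *
      dimRatio (fun n => (F n).subgroupOf H) (K.subgroupOf H) n := by
    funext n
    rw [hv_eq n]
    simp only [dimRatio]
    rcases eq_or_ne ((F n).relIndex H) 1 with h1 | h1
    · have hK1 : (F n).relIndex K = 1 := Nat.dvd_one.mp (h1 ▸ hdvdKH n)
      simp [h1, hK1]
    · have hb2' : 1 < (F n).relIndex H :=
        Nat.lt_of_le_of_ne (Nat.one_le_iff_ne_zero.mpr (hHne n)) (Ne.symm h1)
      have hb2 : (1 : ℝ) < (((F n).relIndex H : ℕ) : ℝ) := by exact_mod_cast hb2'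
      have ha2 : (1 : ℝ) < (((F n).index : ℕ) : ℝ) := by
        exact_mod_cast lt_of_lt_of_le hb2' (Nat.le_of_dvd (Nat.pos_of_ne_zero (hfin n)) (hdvdH n))
      have hlb : Real.log ((F n).relIndex H) ≠ 0 := ne_of_gt (Real.log_pos hb2)
      have hla : Real.log ((F n).index) ≠ 0 := ne_of_gt (Real.log_pos ha2)
      field_simp
  -- conclude
  calc hdimOf F K
      = Filter.liminf (fun n => dimRatio F H n *
          dimRatio (fun n => (F n).subgroupOf H) (K.subgroupOf H) n) Filter.atTop := by
        unfold hdimOf; rw [hpt]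
    _ = hdimOf F H * hdimOf (fun n => (F n).subgroupOf H) (K.subgroupOf H) :=
        liminf_mul_of_tendsto hu_mem hv_mem hstrong

end
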